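/- Suppose the 3×3 matrix subspace L_r is C^r-normal with parameters (p_{1,r}, p_{2,r}, q_{2,r}, q_{3,r}) and L_{r+1} is C^{r+1}-normal with parameters (p_{1,r+1}, p_{2,r+1}, q_{2,r+1}, q_{3,r+1}), and suppose that deleting the first row and first column of L_r gives the same 2×2 subspace as deleting the third row and third column of L_{r+1} (that is, P_{1,1}(L_r) = P_{3,3}(L_{r+1})). Then q_{3,r} = q_{2,r} q_{2,r+1} ρ(C^{r+1}_{3,1}) and p_{1,r+1} = p_{2,r} p_{2,r+1} ρ(C^r_{1,1}). -/

import Mathlib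

noncomputable def rho (Y : Matrix (Fin 2) (Fin 2) ℂ) : ℂ :=
  Y 0 0 * Y 1 1 / (Y 0 1 * Y 1 0)

/-- `C_{k,l}`: delete row `k` and column `l` of a 3×3 matrix (0-based indices). -/
def del (k l : Fin 3) (C : Matrix (Fin 3) (Fin 3) ℂ) : Matrix (Fin 2) (Fin 2) ℂ :=
  C.submatrix k.succAbove l.succAbove

/-- Deleting row `k` and column `l`, as a linear map `M₃(ℂ) → M₂(ℂ)`. -/
def delL (k l : Fin 3) : Matrix (Fin 3) (Fin 3) ℂ →ₗ[ℂ] Matrix (Fin 2) (Fin 2) ℂ where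
  toFun X := X.submatrix k.succAbove l.succAbove
  map_add' _ _ := rfl
  map_smul' _ _ := rfl

/-- The five canonical generators `L₁, L₂, Q₁, Q₂, Q₃` of a `C`-normal subspace with
parameters `p₁, p₂, q₂, q₃`. -/
noncomputable def cBasis (C : Matrix (Fin 3) (Fin 3) ℂ) (p₁ p₂ q₂ q₃ : ℂ) :
    Fin 5 → Matrix (Fin 3) (Fin 3) ℂ :=
  ![!![1, 0, 0; rho (del 2 1 C) * q₂, 0, 0; rho (del 1 1 C) * q₃, 0, 0],
    !![0, 1, 0; 0, rho (del 2 0 C) * q₂, 0; 0, rho (del 1 0 C) * q₃, 0],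
    !![0, 0, 1; 0, 0, q₂; 0, 0, q₃],
    !![0, 0, 0; p₁, p₂, 1; 0, 0, 0],
    !![0, 0, 0; 0, 0, 0; rho (del 0 1 C) * p₁, rho (del 0 0 C) * p₂, 1]]

/-- The `C`-normal subspace with parameters `p₁, p₂, q₂, q₃`: the span of the five
canonical generators. -/
noncomputable def cNormal (C : Matrix (Fin 3) (Fin 3) ℂ) (p₁ p₂ q₂ q₃ : ℂ) :
    Submodule ℂ (Matrix (Fin 3) (Fin 3) ℂ) :=
  Submodule.span ℂ (Set.range (cBasis C p₁ p₂ q₂ q₃))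

/-- Matching of adjacent `C`-normal cross-sections: if `P_{1,1}(L_r) = P_{3,3}(L_{r+1})`,
then `q_{3,r} = q_{2,r} q_{2,r+1} ρ(C^{r+1}_{3,1})` and
`p_{1,r+1} = p_{2,r} p_{2,r+1} ρ(C^r_{1,1})`. -/
theorem adjacent_cnormal (b a : ℕ → ℂ) (hne : ∀ i j : ℕ, b i - a j ≠ 0)
    (C : ℕ → Matrix (Fin 3) (Fin 3) ℂ)
    (hC : ∀ r : ℕ, ∀ i j : Fin 3, C r i j = b (r + i) - a (r + j))
    (r : ℕ) (p₁r p₂r q₂r q₃r p₁r' p₂r' q₂r' q₃r' : ℂ)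
    (hp₁r : p₁r ≠ 0) (hp₂r : p₂r ≠ 0) (hq₂r : q₂r ≠ 0) (hq₃r : q₃r ≠ 0)
    (hp₁r' : p₁r' ≠ 0) (hp₂r' : p₂r' ≠ 0) (hq₂r' : q₂r' ≠ 0) (hq₃r' : q₃r' ≠ 0)
    (hmatch : Submodule.map (delL 0 0) (cNormal (C r) p₁r p₂r q₂r q₃r)
      = Submodule.map (delL 2 2) (cNormal (C (r + 1)) p₁r' p₂r' q₂r' q₃r')) :
    q₃r = q₂r * q₂r' * rho (del 2 0 (C (r + 1))) ∧
    p₁r' = p₂r * p₂r' * rho (del 0 0 (C r)) := by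
  have key : ∀ i : Fin 5, ∃ c : Fin 5 → ℂ,
      delL 2 2 (∑ j, c j • cBasis (C (r+1)) p₁r' p₂r' q₂r' q₃r' j)
        = delL 0 0 (cBasis (C r) p₁r p₂r q₂r q₃r i) := by
    intro i
    have hmem : delL 0 0 (cBasis (C r) p₁r p₂r q₂r q₃r i)
        ∈ Submodule.map (delL 2 2) (cNormal (C (r + 1)) p₁r' p₂r' q₂r' q₃r') := by
      rw [← hmatch]
      exact Submodule.mem_map_of_mem (Submodule.subset_span ⟨i, rfl⟩)
    obtain ⟨X, hX, hXeq⟩ := hmem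
    rw [SetLike.mem_coe, cNormal, Submodule.mem_span_range_iff_exists_fun] at hX
    obtain ⟨c, hc⟩ := hX
    exact ⟨c, by rw [hc, hXeq]⟩
  obtain ⟨c, hc⟩ := key 2
  obtain ⟨d, hd⟩ := key 3
  -- entry equations
  have ec : ∀ k l : Fin 2, (∑ j, c j • cBasis (C (r+1)) p₁r' p₂r' q₂r' q₃r' j)
      ((2:Fin 3).succAbove k) ((2:Fin 3).succAbove l)
      = (cBasis (C r) p₁r p₂r q₂r q₃r 2) ((0:Fin 3).succAbove k) ((0:Fin 3).succAbove l) := by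
    intro k l
    have := congrFun (congrFun hc k) l
    exact this
  have ed : ∀ k l : Fin 2, (∑ j, d j • cBasis (C (r+1)) p₁r' p₂r' q₂r' q₃r' j)
      ((2:Fin 3).succAbove k) ((2:Fin 3).succAbove l)
      = (cBasis (C r) p₁r p₂r q₂r q₃r 3) ((0:Fin 3).succAbove k) ((0:Fin 3).succAbove l) := by
    intro k l
    have := congrFun (congrFun hd k) l
    exact this
  set ρ21 := rho (del 2 1 (C (r+1)))
  set ρ20 := rho (del 2 0 (C (r+1)))
  have c00 := ec 0 0
  have c01 := ec 0 1
  have c10 := ec 1 0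
  have c11 := ec 1 1
  have d00 := ed 0 0
  have d01 := ed 0 1
  have d10 := ed 1 0
  have d11 := ed 1 1
  simp [cBasis, Matrix.sum_apply, Fin.sum_univ_five, show ((2:Fin 3).succAbove 0) = 0 from rfl,
    show ((2:Fin 3).succAbove 1) = 1 from rfl, show ((0:Fin 3).succAbove 0) = 1 from rfl,
    show ((0:Fin 3).succAbove 1) = 2 from rfl, Matrix.vecHead, Matrix.vecTail] at c00 c01 c10 c11 d00 d01 d10 d11
  rw [c00, zero_mul, zero_add] at c10
  have hc3 : c 3 = 0 := by
    rcases mul_eq_zero.mp c10 with h | h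
    · exact h
    · exact absurd h hp₁r'
  rw [c01, hc3, zero_mul, add_zero] at c11
  rw [d00] at d10
  rw [d01, one_mul] at d11
  constructor
  · rw [← c11]; ring
  · -- from d10, d11 : p₁r' * ρ20 * q₂r' = p₂r * p₂r' * ρ21 * q₂r'
    have key2 : p₁r' * (ρ20 * q₂r') = p₂r * p₂r' * (ρ21 * q₂r') := by
      have h1 : d 3 * p₁r' = -(p₂r * (ρ21 * q₂r')) := by linear_combination d10
      have h2 : d 3 * p₂r' = -(ρ20 * q₂r') := by linear_combination d11
      have := congrArg (· * p₁r') h2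
      rw [mul_right_comm, h1] at this
      linear_combination this
    have key3 : p₁r' * ρ20 = p₂r * p₂r' * ρ21 :=
      mul_right_cancel₀ hq₂r' (by linear_combination key2)
    have e20 : ρ20 = ((b (r+1) - a (r+2)) * (b (r+2) - a (r+3)))
        / ((b (r+1) - a (r+3)) * (b (r+2) - a (r+2))) := by
      show rho (del 2 0 (C (r+1))) = _
      simp [rho, del, Matrix.submatrix_apply, hC]
      norm_num [show ((2:Fin 3).succAbove 0) = 0 from rfl, show ((2:Fin 3).succAbove 1) = 1 from rfl,
        show ((0:Fin 3).succAbove 0) = 1 from rfl, show ((0:Fin 3).succAbove 1) = 2 from rfl]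
    have e21 : ρ21 = ((b (r+1) - a (r+1)) * (b (r+2) - a (r+3)))
        / ((b (r+1) - a (r+3)) * (b (r+2) - a (r+1))) := by
      show rho (del 2 1 (C (r+1))) = _
      simp [rho, del, Matrix.submatrix_apply, hC]
      norm_num [show ((2:Fin 3).succAbove 0) = 0 from rfl, show ((2:Fin 3).succAbove 1) = 1 from rfl,
        show ((1:Fin 3).succAbove 0) = 0 from rfl, show ((1:Fin 3).succAbove 1) = 2 from rfl]
    have e00 : rho (del 0 0 (C r)) = ((b (r+1) - a (r+1)) * (b (r+2) - a (r+2)))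
        / ((b (r+1) - a (r+2)) * (b (r+2) - a (r+1))) := by
      simp [rho, del, Matrix.submatrix_apply, hC]
    rw [e20, e21] at key3
    have key4 : p₁r' * ((b (r+1) - a (r+2)) * (b (r+2) - a (r+3)))
          * ((b (r+1) - a (r+3)) * (b (r+2) - a (r+1)))
        = p₂r * p₂r' * ((b (r+1) - a (r+1)) * (b (r+2) - a (r+3)))
          * ((b (r+1) - a (r+3)) * (b (r+2) - a (r+2))) := by
      field_simp [hne (r+1) (r+3), hne (r+2) (r+2), hne (r+2) (r+1), hne (r+2) (r+3)] at key3
      linear_combination (b (r+2) - a (r+3)) * (b (r+1) - a (r+3)) * key3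
    have hD : (b (r+1) - a (r+2)) * (b (r+2) - a (r+1)) ≠ 0 :=
      mul_ne_zero (hne _ _) (hne _ _)
    rw [e00, ← mul_div_assoc, eq_div_iff hD]
    apply mul_right_cancel₀ (mul_ne_zero (hne (r+1) (r+3)) (hne (r+2) (r+3)))
    linear_combination key4
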